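/- For every n ≥ 1, the number of planar binary trees with n leaves whose internal nodes are labeled by elements of the four-element set {↘, ↗, ↖, ↙}, subject to the restriction that a left-growth pattern (p, q) is allowed if and only if p ≠ ↖, q ≠ ↘, and p ≠ q (so the allowed left-growth patterns are exactly (↙,↖), (↙,↗), (↗,↙), (↗,↖), (↘,↙), (↘,↖), (↘,↗)), equals d_n = (1/n)·∑_{j=n}^{2n−1} binom(3n, n+1+j)·binom(j−1, j−n). (These labeled trees are the normal monomials for the Gröbner–Shirshov basis of the nonsymmetric quadri-algebra operad, and d_n is the dimension of the multilinear component of degree n of the free quadri-algebra on one generator.) -/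

import Mathlib

/-- Operation labels `↘` (se), `↗` (ne), `↖` (nw), `↙` (sw). -/
inductive QuadOp where
  | se
  | ne
  | nw
  | sw
deriving DecidableEq

/-- Planar (full) binary trees with internal nodes labeled by `L` and unlabeled leaves. -/
inductive PBTree (L : Type) where
  | leaf : PBTree L
  | node : L → PBTree L → PBTree L → PBTree L

/-- Number of leaves of a planar binary tree. -/
def PBTree.leaves {L : Type} : PBTree L → ℕ
  | .leaf => 1
  | .node _ l r => l.leaves + r.leaves

/-- Normality for the quadri-algebra operad: a left-growth pattern `(p, q)` is allowed
iff `p ≠ ↖`, `q ≠ ↘` and `p ≠ q`. -/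
def PBTree.normalQuad : PBTree QuadOp → Prop
  | .leaf => True
  | .node _ .leaf r => r.normalQuad
  | .node p (.node q a b) r =>
      p ≠ QuadOp.nw ∧ q ≠ QuadOp.se ∧ p ≠ q ∧
        (PBTree.node q a b).normalQuad ∧ r.normalQuad

instance : Fintype QuadOp :=
  ⟨{QuadOp.se, QuadOp.ne, QuadOp.nw, QuadOp.sw}, fun x => by cases x <;> decide⟩
deriving instance DecidableEq for PBTree

theorem PBTree.one_le_leaves {L : Type} : ∀ t : PBTree L, 1 ≤ t.leaves
  | .leaf => le_refl 1
  | .node _ l r => by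
      have := one_le_leaves l; have := one_le_leaves r
      simp only [leaves]; omega

def allTrees : ℕ → Finset (PBTree QuadOp)
  | 0 => ∅
  | 1 => {PBTree.leaf}
  | n + 2 =>
    (Finset.Icc 1 (n + 1)).attach.biUnion fun i =>
      Finset.univ.biUnion fun (p : QuadOp) =>
        ((allTrees i.1) ×ˢ (allTrees (n + 2 - i.1))).image fun lr => PBTree.node p lr.1 lr.2
  decreasing_by
  · have := (Finset.mem_Icc.mp i.2).2; omega
  · have := (Finset.mem_Icc.mp i.2); omega

theorem mem_allTrees : ∀ n (t : PBTree QuadOp), t ∈ allTrees n ↔ t.leaves = n := by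
  intro n
  induction n using Nat.strong_induction_on with
  | _ n ih =>
    match n with
    | 0 => intro t; simp [allTrees]; have := t.one_le_leaves; omega
    | 1 => intro t
           cases t with
           | leaf => simp [allTrees, PBTree.leaves]
           | node p l r =>
             simp only [allTrees, Finset.mem_singleton, PBTree.leaves]
             have := l.one_le_leaves; have := r.one_le_leaves
             constructor
             · intro h; exact absurd h (by simp)
             · intro h; omega
    | n + 2 =>
      intro t
      constructor
      · intro h
        rw [allTrees, Finset.mem_biUnion] at h
        obtain ⟨⟨i, hi⟩, -, h⟩ := h
        rw [Finset.mem_biUnion] at h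
        obtain ⟨p, -, h⟩ := h
        rw [Finset.mem_image] at h
        obtain ⟨⟨l, r⟩, hlr, rfl⟩ := h
        rw [Finset.mem_product] at hlr
        simp only [Finset.mem_Icc] at hi
        have h1 : l.leaves = i := (ih i (by omega) l).mp hlr.1
        have h2 : r.leaves = n + 2 - i := (ih (n + 2 - i) (by omega) r).mp hlr.2
        simp only [PBTree.leaves, h1, h2]; omega
      · intro h
        cases t with
        | leaf => simp [PBTree.leaves] at h
        | node p l r =>
          simp only [PBTree.leaves] at h
          have hl1 := l.one_le_leaves; have hr1 := r.one_le_leaves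
          rw [allTrees, Finset.mem_biUnion]
          refine ⟨⟨l.leaves, Finset.mem_Icc.mpr (by omega)⟩, Finset.mem_attach _ _, ?_⟩
          rw [Finset.mem_biUnion]
          refine ⟨p, Finset.mem_univ _, ?_⟩
          rw [Finset.mem_image]
          refine ⟨(l, r), Finset.mem_product.mpr ⟨?_, ?_⟩, rfl⟩
          · exact (ih l.leaves (by omega) l).mpr rfl
          · exact (ih (n + 2 - l.leaves) (by omega) r).mpr (by omega)

def PBTree.normalB : PBTree QuadOp → Bool
  | .leaf => true
  | .node _ .leaf r => r.normalB
  | .node p (.node q a b) r =>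
      (decide (p ≠ QuadOp.nw ∧ q ≠ QuadOp.se ∧ p ≠ q)) && (PBTree.node q a b).normalB && r.normalB


theorem PBTree.normalB_iff : ∀ t : PBTree QuadOp, t.normalB = true ↔ t.normalQuad
  | .leaf => by simp [normalB, normalQuad]
  | .node p .leaf r => by simp [normalB, normalQuad, normalB_iff r]
  | .node p (.node q a b) r => by
      simp [normalB, normalQuad, normalB_iff r, normalB_iff (PBTree.node q a b), and_assoc]

def leftOKB (p : QuadOp) : PBTree QuadOp → Bool
  | .leaf => true
  | .node q _ _ => decide (p ≠ QuadOp.nw ∧ q ≠ QuadOp.se ∧ p ≠ q)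

theorem normalB_node (p : QuadOp) (l r : PBTree QuadOp) :
    (PBTree.node p l r).normalB = (leftOKB p l && l.normalB && r.normalB) := by
  cases l with
  | leaf => simp [PBTree.normalB, leftOKB]
  | node q a b => simp [PBTree.normalB, leftOKB]

def rootIs (p : QuadOp) : PBTree QuadOp → Bool
  | .leaf => false
  | .node q _ _ => decide (q = p)

def rootLabel : PBTree QuadOp → QuadOp
  | .leaf => QuadOp.se
  | .node q _ _ => q

def NT (n : ℕ) : Finset (PBTree QuadOp) := (allTrees n).filter (fun t => t.normalB)

def aN (n : ℕ) : ℕ := (NT n).card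

def cN (p : QuadOp) (n : ℕ) : ℕ := ((NT n).filter (fun t => rootIs p t)).card

def Lf (p : QuadOp) (i : ℕ) : Finset (PBTree QuadOp) := (NT i).filter (fun l => leftOKB p l)

def lN (p : QuadOp) (i : ℕ) : ℕ := (Lf p i).card

theorem mem_NT (n : ℕ) (t : PBTree QuadOp) :
    t ∈ NT n ↔ t.leaves = n ∧ t.normalB = true := by
  rw [NT, Finset.mem_filter, mem_allTrees]

theorem NT_zero : NT 0 = ∅ := by
  ext t; simp [mem_NT]; intro h; have := t.one_le_leaves; omega

theorem NT_one : NT 1 = {PBTree.leaf} := by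
  ext t
  cases t with
  | leaf => simp [mem_NT, PBTree.leaves, PBTree.normalB]
  | node p l r =>
    simp only [mem_NT, Finset.mem_singleton, PBTree.leaves]
    have := l.one_le_leaves; have := r.one_le_leaves
    constructor
    · intro h; omega
    · intro h; exact absurd h (by simp)

theorem aN_zero : aN 0 = 0 := by simp [aN, NT_zero]
theorem aN_one : aN 1 = 1 := by simp [aN, NT_one]
theorem cN_zero (p : QuadOp) : cN p 0 = 0 := by simp [cN, NT_zero]
theorem cN_one (p : QuadOp) : cN p 1 = 0 := by
  simp [cN, NT_one, Finset.filter_singleton, rootIs]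
theorem lN_zero (p : QuadOp) : lN p 0 = 0 := by simp [lN, Lf, NT_zero]
theorem lN_one (p : QuadOp) : lN p 1 = 1 := by
  simp [lN, Lf, NT_one, Finset.filter_singleton, leftOKB]

theorem NT_filter_decomp (p : QuadOp) (n : ℕ) :
    (NT (n + 2)).filter (fun t => rootIs p t) =
      (Finset.Icc 1 (n + 1)).biUnion (fun i =>
        ((Lf p i) ×ˢ (NT (n + 2 - i))).image fun lr => PBTree.node p lr.1 lr.2) := by
  ext t
  simp only [Finset.mem_filter, Finset.mem_biUnion, Finset.mem_image, Finset.mem_product,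
    Finset.mem_Icc]
  constructor
  · rintro ⟨ht, hroot⟩
    cases t with
    | leaf => simp [rootIs] at hroot
    | node q l r =>
      have hq : q = p := by simpa [rootIs] using hroot
      subst hq
      rw [mem_NT] at ht
      obtain ⟨hleaves, hnorm⟩ := ht
      rw [normalB_node] at hnorm
      simp only [Bool.and_eq_true] at hnorm
      simp only [PBTree.leaves] at hleaves
      have hl1 := l.one_le_leaves; have hr1 := r.one_le_leaves
      refine ⟨l.leaves, by omega, ⟨l, r⟩, ⟨?_, ?_⟩, rfl⟩
      · show l ∈ Lf q l.leaves
        rw [Lf, Finset.mem_filter, mem_NT]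
        exact ⟨⟨rfl, hnorm.1.2⟩, hnorm.1.1⟩
      · show r ∈ NT (n + 2 - l.leaves)
        rw [mem_NT]
        exact ⟨by omega, hnorm.2⟩
  · rintro ⟨i, hi, ⟨l, r⟩, ⟨hl, hr⟩, rfl⟩
    rw [Lf, Finset.mem_filter, mem_NT] at hl
    rw [mem_NT] at hr
    have h1 : l.leaves = i := hl.1.1
    have h2 : r.leaves = n + 2 - i := hr.1
    constructor
    · rw [mem_NT, normalB_node]
      refine ⟨?_, ?_⟩
      · simp only [PBTree.leaves]; omega
      · simp [hl.1.2, hl.2, hr.2]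
    · simp [rootIs]

theorem leaves_of_mem_Lf {p : QuadOp} {i : ℕ} {l : PBTree QuadOp} (h : l ∈ Lf p i) :
    l.leaves = i := by
  rw [Lf, Finset.mem_filter, mem_NT] at h; exact h.1.1

theorem cN_rec (p : QuadOp) (n : ℕ) :
    cN p (n + 2) = ∑ i ∈ Finset.Icc 1 (n + 1), lN p i * aN (n + 2 - i) := by
  rw [cN, NT_filter_decomp]
  rw [Finset.card_biUnion]
  · apply Finset.sum_congr rfl
    intro i _
    have hinj : Set.InjOn (fun lr : PBTree QuadOp × PBTree QuadOp => PBTree.node p lr.1 lr.2)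
        ↑((Lf p i) ×ˢ (NT (n + 2 - i))) := by
      rintro ⟨l₁, r₁⟩ h₁ ⟨l₂, r₂⟩ h₂ heq
      simp only [PBTree.node.injEq] at heq
      simp [heq.1, heq.2]
    rw [Finset.card_image_of_injOn hinj, Finset.card_product]
    rfl
  · intro i hi j hj hij
    simp only [Finset.disjoint_left]
    rintro t ht₁ ht₂
    rw [Finset.mem_image] at ht₁ ht₂
    obtain ⟨⟨l₁, r₁⟩, h₁, rfl⟩ := ht₁
    obtain ⟨⟨l₂, r₂⟩, h₂, heq⟩ := ht₂
    rw [Finset.mem_product] at h₁ h₂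
    simp only [PBTree.node.injEq] at heq
    apply hij
    rw [← leaves_of_mem_Lf h₁.1, ← leaves_of_mem_Lf h₂.1, heq.2.1]

theorem node_of_mem_NT {n : ℕ} {t : PBTree QuadOp} (h : t ∈ NT (n + 2)) :
    ∃ q l r, t = PBTree.node q l r := by
  cases t with
  | leaf => rw [mem_NT] at h; simp [PBTree.leaves] at h
  | node q l r => exact ⟨q, l, r, rfl⟩

theorem aN_rec (n : ℕ) : aN (n + 2) = ∑ q : QuadOp, cN q (n + 2) := by
  rw [aN, Finset.card_eq_sum_card_fiberwise (f := rootLabel) (t := Finset.univ)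
    (fun t _ => Finset.mem_univ _)]
  apply Finset.sum_congr rfl
  intro q _
  congr 1
  ext t
  simp only [Finset.mem_filter, and_congr_right_iff]
  intro ht
  obtain ⟨q', l, r, rfl⟩ := node_of_mem_NT ht
  simp [rootLabel, rootIs, eq_comm]

theorem lN_rec (p : QuadOp) (n : ℕ) :
    lN p (n + 2) = ∑ q : QuadOp,
      (if p ≠ QuadOp.nw ∧ q ≠ QuadOp.se ∧ p ≠ q then cN q (n + 2) else 0) := by
  rw [lN, Finset.card_eq_sum_card_fiberwise (f := rootLabel) (t := Finset.univ)
    (fun t _ => Finset.mem_univ _)]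
  apply Finset.sum_congr rfl
  intro q _
  by_cases hok : p ≠ QuadOp.nw ∧ q ≠ QuadOp.se ∧ p ≠ q
  · rw [if_pos hok]
    congr 1
    ext t
    simp only [Lf, Finset.mem_filter, and_assoc, and_congr_right_iff]
    intro ht
    obtain ⟨q', l, r, rfl⟩ := node_of_mem_NT ht
    simp only [leftOKB, rootLabel, rootIs]
    constructor
    · rintro ⟨-, rfl⟩; simp
    · intro h
      have : q' = q := by simpa using h
      subst this
      exact ⟨by simpa using hok, rfl⟩
  · rw [if_neg hok]
    convert Finset.card_empty
    ext t
    simp only [Lf, Finset.mem_filter, Finset.notMem_empty, iff_false, not_and, and_imp]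
    intro ht
    obtain ⟨q', l, r, rfl⟩ := node_of_mem_NT ht
    simp only [leftOKB, rootLabel, decide_eq_true_eq]
    intro hok' hq
    subst hq
    exact hok hok'

open PowerSeries

noncomputable def Fq : ℚ⟦X⟧ := PowerSeries.mk fun n => (aN n : ℚ)
noncomputable def Cq (p : QuadOp) : ℚ⟦X⟧ := PowerSeries.mk fun n => (cN p n : ℚ)
noncomputable def Lq (p : QuadOp) : ℚ⟦X⟧ := PowerSeries.mk fun n => (lN p n : ℚ)

theorem cN_conv (p : QuadOp) (m : ℕ) :
    cN p m = ∑ i ∈ Finset.range (m + 1), lN p i * aN (m - i) := by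
  match m with
  | 0 => simp [cN_zero, lN_zero]
  | 1 => simp [cN_one, lN_zero, Finset.sum_range_succ, aN_zero]
  | n + 2 =>
    rw [cN_rec]
    apply Finset.sum_subset
    · intro x hx
      simp only [Finset.mem_Icc] at hx
      simp only [Finset.mem_range]; omega
    · intro x hx hnx
      have : x = 0 ∨ x = n + 2 := by
        simp only [Finset.mem_range] at hx
        simp only [Finset.mem_Icc] at hnx
        omega
      rcases this with rfl | rfl
      · simp [lN_zero]
      · simp [aN_zero]

theorem Cq_eq (p : QuadOp) : Cq p = Lq p * Fq := by
  ext m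
  rw [PowerSeries.coeff_mul, Finset.Nat.sum_antidiagonal_eq_sum_range_succ_mk]
  simp only [Cq, Lq, Fq, coeff_mk]
  rw [cN_conv p m]
  push_cast
  rfl

theorem Lq_eq (p : QuadOp) : Lq p = X + ∑ q : QuadOp,
    (if p ≠ QuadOp.nw ∧ q ≠ QuadOp.se ∧ p ≠ q then Cq q else 0) := by
  ext m
  rw [map_add, map_sum]
  simp only [apply_ite (PowerSeries.coeff m), map_zero, Lq, Cq, coeff_mk, coeff_X]
  match m with
  | 0 => simp [lN_zero, cN_zero]
  | 1 => simp [lN_one, cN_one]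
  | n + 2 =>
    rw [lN_rec]
    push_cast
    rw [zero_add]

theorem Fq_eq : Fq = X + ∑ q : QuadOp, Cq q := by
  ext m
  rw [map_add, map_sum]
  simp only [Fq, Cq, coeff_mk, coeff_X]
  match m with
  | 0 => simp [aN_zero, cN_zero]
  | 1 => simp [aN_one, cN_one]
  | n + 2 =>
    rw [aN_rec, if_neg (by omega : ¬ (n + 2 = 1)), zero_add]
    push_cast
    rfl

theorem sum_quadOp {M : Type*} [AddCommMonoid M] (f : QuadOp → M) :
    ∑ q : QuadOp, f q = f QuadOp.se + f QuadOp.ne + f QuadOp.nw + f QuadOp.sw := by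
  have : (Finset.univ : Finset QuadOp) =
      {QuadOp.se, QuadOp.ne, QuadOp.nw, QuadOp.sw} := by decide
  rw [this]
  rw [Finset.sum_insert (by decide), Finset.sum_insert (by decide),
    Finset.sum_insert (by decide), Finset.sum_singleton]
  simp [add_assoc]

theorem constCoeff_Fq : PowerSeries.constantCoeff Fq = 0 := by
  simp [Fq, ← coeff_zero_eq_constantCoeff, aN_zero]

theorem one_add_Fq_ne : (1 + Fq : ℚ⟦X⟧) ≠ 0 := by
  intro h
  have := congrArg (PowerSeries.constantCoeff) h
  rw [map_add, map_one, constCoeff_Fq, map_zero] at this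
  norm_num at this

theorem hLnw : Lq QuadOp.nw = X := by
  rw [Lq_eq, sum_quadOp]; simp

theorem hLne : Lq QuadOp.ne = X + (Cq QuadOp.nw + Cq QuadOp.sw) := by
  rw [Lq_eq, sum_quadOp]; simp

theorem hLsw : Lq QuadOp.sw = X + (Cq QuadOp.ne + Cq QuadOp.nw) := by
  rw [Lq_eq, sum_quadOp]; simp

theorem hLse : Lq QuadOp.se = X + (Cq QuadOp.ne + Cq QuadOp.nw + Cq QuadOp.sw) := by
  rw [Lq_eq, sum_quadOp]; simp [add_assoc]

theorem hw : Cq QuadOp.nw = X * Fq := by rw [Cq_eq, hLnw]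

theorem hne : Cq QuadOp.ne = (X + Cq QuadOp.nw + Cq QuadOp.sw) * Fq := by
  rw [Cq_eq, hLne]; ring

theorem hsw : Cq QuadOp.sw = (X + Cq QuadOp.nw + Cq QuadOp.ne) * Fq := by
  rw [Cq_eq, hLsw]; ring

theorem hse : Cq QuadOp.se = (X + Cq QuadOp.ne + Cq QuadOp.nw + Cq QuadOp.sw) * Fq := by
  rw [Cq_eq, hLse]; ring

theorem hFsum : Fq = X + (Cq QuadOp.se + Cq QuadOp.ne + Cq QuadOp.nw + Cq QuadOp.sw) := by
  rw [Fq_eq, sum_quadOp]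

theorem hes : Cq QuadOp.ne = Cq QuadOp.sw := by
  have h1 : (Cq QuadOp.ne - Cq QuadOp.sw) * (1 + Fq) = 0 := by
    linear_combination hne - hsw
  rcases mul_eq_zero.mp h1 with h | h
  · exact sub_eq_zero.mp h
  · exact absurd h one_add_Fq_ne

theorem hE : Cq QuadOp.ne * (1 - Fq) = X * Fq * (1 + Fq) := by
  linear_combination hne + Fq * hw - Fq * hes

theorem hA : Fq = (X + X * Fq + 2 * Cq QuadOp.ne) * (1 + Fq) := by
  linear_combination hFsum + hse - (1 + Fq) * hes + (1 + Fq) * hw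

theorem hkey : Fq * (1 - Fq) = X * (1 + Fq) ^ 3 := by
  linear_combination (1 - Fq) * hA + 2 * (1 + Fq) * hE

noncomputable def Uq : ℚ⟦X⟧ := PowerSeries.mk fun k => (aN (k + 1) : ℚ)

theorem hFXU : Fq = X * Uq := by
  ext m
  cases m with
  | zero => simp [Fq, coeff_zero_eq_constantCoeff, aN_zero]
  | succ k => rw [coeff_succ_X_mul]; simp [Fq, Uq, coeff_mk]

theorem constU : PowerSeries.constantCoeff Uq = 1 := by
  have : PowerSeries.constantCoeff Uq = (PowerSeries.coeff 0) Uq := by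
    rw [coeff_zero_eq_constantCoeff]
  rw [this]; simp [Uq, aN_one]

noncomputable def Vq : ℚ⟦X⟧ := Uq⁻¹

theorem hUV : Uq * Vq = 1 :=
  PowerSeries.mul_inv_cancel _ (by rw [constU]; norm_num)

theorem hUeq : Uq * (1 - Fq) = (1 + Fq) ^ 3 := by
  have h : X * (Uq * (1 - Fq)) = X * (1 + Fq) ^ 3 := by
    linear_combination hkey - (1 - Fq) * hFXU
  exact mul_left_cancel₀ PowerSeries.X_ne_zero h

theorem dF_eq : d⁄dX ℚ Fq = Uq + X * d⁄dX ℚ Uq := by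
  rw [hFXU, Derivation.leibniz, derivative_X]
  simp only [smul_eq_mul, mul_one]
  ring

theorem dV_eq : d⁄dX ℚ Vq = -Vq ^ 2 * d⁄dX ℚ Uq := by
  rw [Vq, derivative_inv']

theorem rho : ∀ k : ℕ, (PowerSeries.coeff k) (d⁄dX ℚ Fq * Vq ^ (k + 1)) =
    if k = 0 then 1 else 0 := by
  intro k
  cases k with
  | zero =>
    rw [if_pos rfl, coeff_zero_eq_constantCoeff, map_mul, pow_one]
    have h1 : PowerSeries.constantCoeff (d⁄dX ℚ Fq) = 1 := by
      have : PowerSeries.constantCoeff (d⁄dX ℚ Fq) = (PowerSeries.coeff 0) (d⁄dX ℚ Fq) := by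
        rw [coeff_zero_eq_constantCoeff]
      rw [this, PowerSeries.coeff_derivative]
      simp [Fq, aN_one]
    have h2 : PowerSeries.constantCoeff Vq = 1 := by
      rw [Vq, PowerSeries.constantCoeff_inv, constU]; norm_num
    rw [h1, h2]; norm_num
  | succ k =>
    rw [if_neg (Nat.succ_ne_zero k)]
    have h1 : d⁄dX ℚ Fq * Vq ^ (k + 2) = Vq ^ (k + 1) + X * (d⁄dX ℚ Uq * Vq ^ (k + 2)) := by
      linear_combination Vq ^ (k + 2) * dF_eq + Vq ^ (k + 1) * hUV
    rw [h1, map_add, PowerSeries.coeff_succ_X_mul]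
    have h3 : d⁄dX ℚ (Vq ^ (k + 1)) =
        -(PowerSeries.C ((k : ℚ) + 1)) * (Vq ^ (k + 2) * d⁄dX ℚ Uq) := by
      rw [Derivation.leibniz_pow, dV_eq]
      simp only [nsmul_eq_mul, smul_eq_mul, map_add, map_one, map_natCast]
      push_cast
      ring
    have h4 := congrArg (PowerSeries.coeff k) h3
    rw [PowerSeries.coeff_derivative] at h4
    rw [neg_mul, map_neg, PowerSeries.coeff_C_mul] at h4
    have h6 : ((PowerSeries.coeff (k + 1)) (Vq ^ (k + 1)) +
        (PowerSeries.coeff k) (d⁄dX ℚ Uq * Vq ^ (k + 2))) * ((k : ℚ) + 1) = 0 := by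
      have hc : (PowerSeries.coeff k) (d⁄dX ℚ Uq * Vq ^ (k + 2)) =
          (PowerSeries.coeff k) (Vq ^ (k + 2) * d⁄dX ℚ Uq) := by rw [mul_comm]
      rw [hc]
      linear_combination h4
    rcases mul_eq_zero.mp h6 with h | h
    · exact h
    · exact absurd h (by positivity)

theorem hUVpow (i : ℕ) : Uq ^ i * Vq ^ i = 1 := by rw [← mul_pow, hUV, one_pow]

theorem hFpow (i : ℕ) : Fq ^ i = X ^ i * Uq ^ i := by rw [hFXU, mul_pow]

theorem tau (N i : ℕ) : (PowerSeries.coeff N) (d⁄dX ℚ Fq * Vq ^ (N + 1) * Fq ^ i) =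
    if i = N then 1 else 0 := by
  rcases le_or_gt i N with hle | hlt
  · obtain ⟨k, rfl⟩ : ∃ k, N = i + k := ⟨N - i, by omega⟩
    have key : d⁄dX ℚ Fq * Vq ^ (i + k + 1) * Fq ^ i =
        X ^ i * (d⁄dX ℚ Fq * Vq ^ (k + 1)) := by
      linear_combination (d⁄dX ℚ Fq * Vq ^ (k + 1) * X ^ i) * hUVpow i +
        (d⁄dX ℚ Fq * Vq ^ (i + k + 1)) * hFpow i
    rw [key]
    have : i + k = k + i := by omega
    rw [this, PowerSeries.coeff_X_pow_mul, rho k]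
    by_cases hk : k = 0
    · subst hk; simp
    · rw [if_neg hk, if_neg (by omega)]
  · obtain ⟨j, rfl⟩ : ∃ j, i = N + 1 + j := ⟨i - (N + 1), by omega⟩
    rw [if_neg (by omega)]
    have hdvd : (X : ℚ⟦X⟧) ^ (N + 1) ∣ d⁄dX ℚ Fq * Vq ^ (N + 1) * Fq ^ (N + 1 + j) := by
      apply Dvd.dvd.mul_left
      have h1 : (X : ℚ⟦X⟧) ^ (N + 1) ∣ Fq ^ (N + 1) := by
        apply pow_dvd_pow_of_dvd
        rw [hFXU]; exact dvd_mul_right _ _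
      exact h1.trans (pow_dvd_pow Fq (by omega))
    exact PowerSeries.X_pow_dvd_iff.mp hdvd N (by omega)

theorem main_id (N : ℕ) :
    ((N + 1 : ℕ) : ℚ) * (aN (N + 1) : ℚ) =
      ∑ p ∈ Finset.HasAntidiagonal.antidiagonal N,
        (((N + p.1).choose N : ℚ) * ((3 * (N + 1)).choose p.2 : ℚ)) := by
  set n : ℕ := N + 1 with hn
  set inv : ℚ⟦X⟧ := (PowerSeries.invOneSubPow ℚ n).val with hinv
  set Pp : Polynomial ℚ := PowerSeries.trunc n inv with hPp
  -- inv minus its truncation is divisible by X^n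
  have hdvd2 : (X : ℚ⟦X⟧) ^ n ∣ inv - (Pp : ℚ⟦X⟧) := by
    rw [PowerSeries.X_pow_dvd_iff]
    intro m hm
    rw [map_sub, Polynomial.coeff_coe, hPp, PowerSeries.coeff_trunc, if_pos hm, sub_self]
  have hunit : inv * (1 - X) ^ n = 1 := by
    rw [hinv, ← PowerSeries.invOneSubPow_inv_eq_one_sub_pow]
    exact (PowerSeries.invOneSubPow ℚ n).val_inv
  -- the polynomial B := 1 - Pp * (1-X)^n is divisible by X^n
  have hBdvd : (Polynomial.X : Polynomial ℚ) ^ n ∣ 1 - Pp * (1 - Polynomial.X) ^ n := by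
    rw [Polynomial.X_pow_dvd_iff]
    intro d hd
    have hcoe : ((1 - Pp * (1 - Polynomial.X) ^ n : Polynomial ℚ) : ℚ⟦X⟧) =
        (inv - (Pp : ℚ⟦X⟧)) * (1 - X) ^ n := by
      push_cast
      linear_combination -hunit
    have := congrArg (PowerSeries.coeff d) hcoe
    rw [Polynomial.coeff_coe] at this
    rw [this]
    exact PowerSeries.X_pow_dvd_iff.mp (hdvd2.mul_right _) d hd
  obtain ⟨Mp, hMp⟩ := hBdvd
  have hpoly : Pp * (1 - Polynomial.X) ^ n + Polynomial.X ^ n * Mp = 1 := by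
    linear_combination -hMp
  -- substitute X := Fq
  have h2 : (Polynomial.aeval Fq Pp) * (1 - Fq) ^ n + Fq ^ n * (Polynomial.aeval Fq Mp) = 1 := by
    have h := congrArg (Polynomial.aeval Fq) hpoly
    simpa only [map_add, map_mul, map_pow, map_sub, map_one, Polynomial.aeval_X] using h
  have hU3 : Uq ^ n * (1 - Fq) ^ n = (1 + Fq) ^ (3 * n) := by
    rw [← mul_pow, hUeq, ← pow_mul, mul_comm 3 n]
  have h3 : Vq ^ n * ((Polynomial.aeval Fq Pp) * (1 + Fq) ^ (3 * n)) +
      X ^ n * (Uq ^ n * (Polynomial.aeval Fq Mp)) = 1 := by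
    linear_combination h2 - Vq ^ n * (Polynomial.aeval Fq Pp) * hU3 +
      (Polynomial.aeval Fq Pp) * (1 - Fq) ^ n * hUVpow n -
      (Polynomial.aeval Fq Mp) * hFpow n
  -- multiply by dF and take coefficient N
  have h4 := congrArg (fun g => (PowerSeries.coeff N) (d⁄dX ℚ Fq * g)) h3
  simp only [mul_add, map_add, mul_one] at h4
  have h5 : (PowerSeries.coeff N) (d⁄dX ℚ Fq * (X ^ n * (Uq ^ n * (Polynomial.aeval Fq Mp)))) = 0 := by
    have hdvd : (X : ℚ⟦X⟧) ^ n ∣ d⁄dX ℚ Fq * (X ^ n * (Uq ^ n * (Polynomial.aeval Fq Mp))) :=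
      Dvd.dvd.mul_left (dvd_mul_right _ _) _
    exact PowerSeries.X_pow_dvd_iff.mp hdvd N (by omega)
  rw [h5, add_zero] at h4
  have h6 : (PowerSeries.coeff N) (d⁄dX ℚ Fq) = ((N + 1 : ℕ) : ℚ) * (aN (N + 1) : ℚ) := by
    rw [PowerSeries.coeff_derivative]
    simp [Fq]
    ring
  rw [h6] at h4
  -- expand via the polynomial Dp
  set Dp : Polynomial ℚ := Pp * (1 + Polynomial.X) ^ (3 * n) with hDp
  have hDeval : Polynomial.aeval Fq Dp = (Polynomial.aeval Fq Pp) * (1 + Fq) ^ (3 * n) := by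
    rw [hDp, map_mul, map_pow, map_add, map_one, Polynomial.aeval_X]
  have h7 : d⁄dX ℚ Fq * (Vq ^ n * ((Polynomial.aeval Fq Pp) * (1 + Fq) ^ (3 * n))) =
      ∑ i ∈ Finset.range (Dp.natDegree + 1),
        Dp.coeff i • (d⁄dX ℚ Fq * Vq ^ n * Fq ^ i) := by
    rw [← hDeval, Polynomial.aeval_eq_sum_range, Finset.mul_sum, Finset.mul_sum]
    apply Finset.sum_congr rfl
    intro i _
    rw [mul_smul_comm, mul_smul_comm]
    ring_nf
  rw [h7, map_sum] at h4
  have h8 : ∀ i ∈ Finset.range (Dp.natDegree + 1),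
      (PowerSeries.coeff N) (Dp.coeff i • (d⁄dX ℚ Fq * Vq ^ n * Fq ^ i)) =
        Dp.coeff i * (if i = N then 1 else 0) := by
    intro i _
    rw [map_smul, smul_eq_mul, tau N i]
  rw [Finset.sum_congr rfl h8] at h4
  have h9 : ∑ i ∈ Finset.range (Dp.natDegree + 1), Dp.coeff i * (if i = N then 1 else 0) =
      Dp.coeff N := by
    rw [Finset.sum_eq_single N]
    · rw [if_pos rfl, mul_one]
    · intro b _ hb; rw [if_neg hb, mul_zero]
    · intro hN
      rw [if_pos rfl, mul_one]
      apply Polynomial.coeff_eq_zero_of_natDegree_lt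
      simp only [Finset.mem_range] at hN
      omega
  rw [h9] at h4
  rw [← h4]
  -- identify Dp.coeff N with the binomial sum
  have h10 : Dp.coeff N = (PowerSeries.coeff N) (inv * (1 + X) ^ (3 * n)) := by
    have hdiff : (PowerSeries.coeff N) ((inv - (Pp : ℚ⟦X⟧)) * (1 + X) ^ (3 * n)) = 0 :=
      PowerSeries.X_pow_dvd_iff.mp (hdvd2.mul_right _) N (by omega)
    have : (PowerSeries.coeff N) ((Pp : ℚ⟦X⟧) * (1 + X) ^ (3 * n)) =
        (PowerSeries.coeff N) (inv * (1 + X) ^ (3 * n)) := by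
      have expand : (inv : ℚ⟦X⟧) * (1 + X) ^ (3 * n) =
          (inv - (Pp : ℚ⟦X⟧)) * (1 + X) ^ (3 * n) + (Pp : ℚ⟦X⟧) * (1 + X) ^ (3 * n) := by ring
      rw [expand, map_add, hdiff, zero_add]
    rw [← this, hDp]
    have hcoe2 : ((Pp * (1 + Polynomial.X) ^ (3 * n) : Polynomial ℚ) : ℚ⟦X⟧) =
        (Pp : ℚ⟦X⟧) * (1 + X) ^ (3 * n) := by push_cast; ring
    rw [← hcoe2, Polynomial.coeff_coe]
  rw [h10, PowerSeries.coeff_mul]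
  apply Finset.sum_congr rfl
  rintro ⟨i, j⟩ hij
  have hcoeff_inv : (PowerSeries.coeff i) inv = ((N + i).choose N : ℚ) := by
    rw [hinv, PowerSeries.invOneSubPow_val_eq_mk_sub_one_add_choose_of_pos ℚ n (by omega),
      PowerSeries.coeff_mk]
    norm_num [hn]
  have hcoeff_pow : (PowerSeries.coeff j) ((1 + X : ℚ⟦X⟧) ^ (3 * n)) =
      ((3 * n).choose j : ℚ) := by
    have hcoe3 : ((1 + X : ℚ⟦X⟧)) ^ (3 * n) = (((1 + Polynomial.X : Polynomial ℚ) ^ (3 * n) : Polynomial ℚ) : ℚ⟦X⟧) := by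
      push_cast; ring
    rw [hcoe3, Polynomial.coeff_coe, Polynomial.coeff_one_add_X_pow]
  rw [hcoeff_inv, hcoeff_pow]

theorem sum_reindex (N : ℕ) :
    ∑ j ∈ Finset.Icc (N + 1) (2 * (N + 1) - 1),
        (3 * (N + 1)).choose ((N + 1) + 1 + j) * (j - 1).choose (j - (N + 1)) =
      ∑ k ∈ Finset.range (N + 1), (N + k).choose N * (3 * (N + 1)).choose (N - k) := by
  apply Finset.sum_bij' (fun j _ => j - (N + 1)) (fun k _ => k + (N + 1))
  · intro j hj
    simp only [Finset.mem_Icc] at hj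
    simp only [Finset.mem_range]; omega
  · intro k hk
    simp only [Finset.mem_range] at hk
    simp only [Finset.mem_Icc]; omega
  · intro j hj
    simp only [Finset.mem_Icc] at hj
    omega
  · intro k hk
    simp only [Finset.mem_range] at hk
    omega
  · intro j hj
    simp only [Finset.mem_Icc] at hj
    have h1 : (3 * (N + 1)).choose ((N + 1) + 1 + j) = (3 * (N + 1)).choose (N - (j - (N + 1))) := by
      rw [← Nat.choose_symm (by omega : (N + 1) + 1 + j ≤ 3 * (N + 1))]
      congr 1
      omega
    have h2 : (j - 1).choose (j - (N + 1)) = (N + (j - (N + 1))).choose N := by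
      rw [← Nat.choose_symm (by omega : j - (N + 1) ≤ j - 1)]
      congr 1 <;> omega
    rw [h1, h2, mul_comm]

theorem nat_main (N : ℕ) :
    (N + 1) * aN (N + 1) =
      ∑ k ∈ Finset.range (N + 1), (N + k).choose N * (3 * (N + 1)).choose (N - k) := by
  have hQ := main_id N
  rw [Finset.Nat.sum_antidiagonal_eq_sum_range_succ_mk] at hQ
  exact_mod_cast hQ

/-- the number of `{↘,↗,↖,↙}`-labeled planar binary trees with `n` leaves
whose left-growth patterns `(p,q)` all satisfy `p ≠ ↖`, `q ≠ ↘`, `p ≠ q` equals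
`d_n = (1/n) ∑_{j=n}^{2n-1} binom(3n, n+1+j) binom(j-1, j-n)`. -/
theorem count_normal_quadri_trees (n : ℕ) (hn : 1 ≤ n) :
    {t : PBTree QuadOp | t.leaves = n ∧ t.normalQuad}.ncard =
      (∑ j ∈ Finset.Icc n (2 * n - 1),
        (3 * n).choose (n + 1 + j) * (j - 1).choose (j - n)) / n := by
  obtain ⟨N, rfl⟩ : ∃ N, n = N + 1 := ⟨n - 1, by omega⟩
  have hset : {t : PBTree QuadOp | t.leaves = N + 1 ∧ t.normalQuad} = ↑(NT (N + 1)) := by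
    ext t
    simp only [Set.mem_setOf_eq, Finset.mem_coe, mem_NT, PBTree.normalB_iff]
  rw [hset, Set.ncard_coe_finset]
  have hS : (∑ j ∈ Finset.Icc (N + 1) (2 * (N + 1) - 1),
      (3 * (N + 1)).choose ((N + 1) + 1 + j) * (j - 1).choose (j - (N + 1))) =
      (N + 1) * aN (N + 1) := by
    rw [sum_reindex, ← nat_main]
  rw [hS, Nat.mul_div_cancel_left _ (by omega : 0 < N + 1)]
  rfl
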